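/- Let V be a finite-dimensional real normed vector space, F ⊆ V a finite nonempty set, and S ⊆ V a finite set such that the cone cone(S) generated by S is proper (contains no line through the origin). Then conv(F) + cone(S) = ⋂_{v ∈ F} ( v + cone({w − v : w ∈ F} ∪ S) ), i.e. the sum of the polytope conv(F) and the cone cone(S) equals the intersection over all v ∈ F of the translated cones generated by the differences F − v together with S. -/

import Mathlib

open Pointwise

/-- The cone generated by a set `S`: all finite nonnegative linear combinations of
elements of `S`. -/
def coneGen {V : Type*} [AddCommGroup V] [Module ℝ V] (S : Set V) : Set V :=
  { v | ∃ (n : ℕ) (c : Fin n → ℝ) (s : Fin n → V),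
      (∀ i, 0 ≤ c i) ∧ (∀ i, s i ∈ S) ∧ v = ∑ i, c i • s i }

section Aux

variable {V : Type*} [AddCommGroup V] [Module ℝ V]

lemma coneGen_eq_span (S : Set V) :
    coneGen S = (Submodule.span {c : ℝ // 0 ≤ c} S : Set V) := by
  ext x
  simp only [coneGen, Set.mem_setOf_eq, SetLike.mem_coe, Submodule.mem_span_set']
  constructor
  · rintro ⟨n, c, s, hc, hs, rfl⟩
    exact ⟨n, fun i => ⟨c i, hc i⟩, fun i => ⟨s i, hs i⟩, rfl⟩
  · rintro ⟨n, f, g, rfl⟩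
    exact ⟨n, fun i => (f i : ℝ), fun i => (g i : V), fun i => (f i).2,
      fun i => (g i).2, rfl⟩

lemma zero_mem_coneGen (S : Set V) : (0 : V) ∈ coneGen S := by
  rw [coneGen_eq_span]; exact Submodule.zero_mem _

lemma subset_coneGen (S : Set V) : S ⊆ coneGen S := by
  rw [coneGen_eq_span]; exact Submodule.subset_span

lemma coneGen_mono {S T : Set V} (h : S ⊆ T) : coneGen S ⊆ coneGen T := by
  rw [coneGen_eq_span, coneGen_eq_span]
  exact Submodule.span_mono h

lemma add_mem_coneGen {S : Set V} {x y : V} (hx : x ∈ coneGen S) (hy : y ∈ coneGen S) :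
    x + y ∈ coneGen S := by
  rw [coneGen_eq_span] at *
  exact Submodule.add_mem _ hx hy

lemma smul_mem_coneGen {S : Set V} {x : V} {t : ℝ} (ht : 0 ≤ t) (hx : x ∈ coneGen S) :
    t • x ∈ coneGen S := by
  rw [coneGen_eq_span] at *
  exact Submodule.smul_mem _ (⟨t, ht⟩ : {c : ℝ // 0 ≤ c}) hx

lemma coneGen_convex (S : Set V) : Convex ℝ (coneGen S) := by
  intro x hx y hy a b ha hb _
  exact add_mem_coneGen (smul_mem_coneGen ha hx) (smul_mem_coneGen hb hy)

lemma convexHull_subset_coneGen (S : Set V) : convexHull ℝ S ⊆ coneGen S :=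
  convexHull_min (subset_coneGen S) (coneGen_convex S)

lemma coneGen_diff_zero (S : Set V) : coneGen (S \ {0}) = coneGen S := by
  rw [coneGen_eq_span, coneGen_eq_span]
  refine congrArg _ (le_antisymm (Submodule.span_mono Set.diff_subset) ?_)
  rw [Submodule.span_le]
  intro x hx
  by_cases hx0 : x = 0
  · simp [hx0]
  · exact Submodule.subset_span ⟨hx, hx0⟩

lemma sub_mem_coneGen_of_mem_convexHull {F : Set V} {v p : V}
    (hp : p ∈ convexHull ℝ F) :
    p - v ∈ coneGen ((fun w => w - v) '' F) := by
  set K := coneGen ((fun w => w - v) '' F)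
  have hA : Convex ℝ {y : V | y - v ∈ K} := by
    intro x hx y hy a b ha hb hab
    have hm : a • (x - v) + b • (y - v) ∈ K :=
      add_mem_coneGen (smul_mem_coneGen ha hx) (smul_mem_coneGen hb hy)
    have : a • x + b • y - v = a • (x - v) + b • (y - v) := by
      have h1 : a • (x - v) + b • (y - v) = a • x + b • y - (a + b) • v := by
        rw [smul_sub, smul_sub, add_smul]; abel
      rw [h1, hab, one_smul]
    simpa [Set.mem_setOf_eq, this] using hm
  have hF : F ⊆ {y : V | y - v ∈ K} := fun w hw =>
    subset_coneGen _ ⟨w, hw, rfl⟩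
  exact convexHull_min hF hA hp

lemma coneGen_apply_nonpos (f : V →ₗ[ℝ] ℝ) {G : Set V} (hG : ∀ g ∈ G, f g ≤ 0)
    {x : V} (hx : x ∈ coneGen G) : f x ≤ 0 := by
  obtain ⟨n, c, s, hc, hs, rfl⟩ := hx
  rw [map_sum]
  refine Finset.sum_nonpos fun i _ => ?_
  rw [map_smul, smul_eq_mul]
  exact mul_nonpos_iff.2 (Or.inl ⟨hc i, hG _ (hs i)⟩)

end Aux

section Closed

variable {V : Type*} [NormedAddCommGroup V] [NormedSpace ℝ V] [FiniteDimensional ℝ V]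

lemma coneGen_isClosed (S : Set V) (hSfin : S.Finite)
    (hproper : ∀ u ∈ coneGen S, -u ∈ coneGen S → u = 0) :
    IsClosed (coneGen S) := by
  rw [← coneGen_diff_zero S]
  set S' : Set V := S \ {0} with hS'
  rcases Set.eq_empty_or_nonempty S' with hS'e | hS'ne
  · rw [hS'e, coneGen_eq_span, Submodule.span_empty, Submodule.bot_coe]
    exact isClosed_singleton
  set C : Set V := convexHull ℝ S' with hC
  have hCcpt : IsCompact C := (hSfin.diff (t := {0})).isCompact_convexHull (𝕜 := ℝ)
  have hCne : C.Nonempty := hS'ne.mono (subset_convexHull ℝ S')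
  -- 0 is not in the convex hull of the nonzero generators
  have h0C : (0 : V) ∉ C := by
    intro h0
    rw [hC, convexHull_eq] at h0
    obtain ⟨ι, t, w, z, hw₀, hw₁, hz, hcm⟩ := h0
    rw [Finset.centerMass_eq_of_sum_1 _ _ hw₁] at hcm
    have hex : ∃ i ∈ t, 0 < w i := by
      by_contra h
      push_neg at h
      have : ∑ i ∈ t, w i ≤ 0 := Finset.sum_nonpos h
      linarith
    obtain ⟨i₀, hi₀t, hi₀⟩ := hex
    classical
    have hu : w i₀ • z i₀ ∈ coneGen S :=
      smul_mem_coneGen hi₀.le (subset_coneGen S (hz i₀ hi₀t).1)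
    have hneg : -(w i₀ • z i₀) ∈ coneGen S := by
      have hsum : ∑ i ∈ t.erase i₀, w i • z i + w i₀ • z i₀ = 0 :=
        (Finset.sum_erase_add t (fun i => w i • z i) hi₀t).trans hcm
      have hrw : -(w i₀ • z i₀) = ∑ i ∈ t.erase i₀, w i • z i := by
        rw [neg_eq_iff_add_eq_zero, add_comm]
        exact hsum
      rw [hrw, coneGen_eq_span]
      refine Submodule.sum_mem _ fun i hi => ?_
      have hm : w i • z i ∈ coneGen S :=
        smul_mem_coneGen (hw₀ i (Finset.mem_of_mem_erase hi))
          (subset_coneGen S (hz i (Finset.mem_of_mem_erase hi)).1)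
      rwa [coneGen_eq_span, SetLike.mem_coe] at hm
    have := hproper _ hu hneg
    have hz0 : z i₀ = 0 := by
      rcases smul_eq_zero.1 this with h | h
      · exact absurd h hi₀.ne'
      · exact h
    exact (hz i₀ hi₀t).2 (by simp [hz0])
  -- separating functional
  obtain ⟨f, a, b, hfa, hab, hfb⟩ :=
    geometric_hahn_banach_compact_closed (convex_singleton (0 : V)) isCompact_singleton
      (convex_convexHull ℝ S') hCcpt.isClosed (Set.disjoint_singleton_left.2 h0C)
  have ha0 : 0 < a := by simpa using hfa 0 rfl
  have hb0 : 0 < b := lt_trans ha0 hab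
  -- conic representation
  have hKrep : coneGen S' = (fun p : ℝ × V => p.1 • p.2) '' (Set.Ici (0 : ℝ) ×ˢ C) := by
    apply Set.Subset.antisymm
    · rintro x ⟨n, c, s, hc, hs, rfl⟩
      set T : ℝ := ∑ i, c i with hT
      by_cases hT0 : T = 0
      · obtain ⟨c₀, hc₀⟩ := hCne
        refine ⟨(0, c₀), ⟨Set.self_mem_Ici, hc₀⟩, ?_⟩
        have hz : ∀ i, c i = 0 := fun i =>
          (Finset.sum_eq_zero_iff_of_nonneg (fun j _ => hc j)).1 hT0 i (Finset.mem_univ i)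
        show (0 : ℝ) • c₀ = ∑ i, c i • s i
        rw [zero_smul]
        exact (Finset.sum_eq_zero fun i _ => by rw [hz i, zero_smul]).symm
      · have hTpos : 0 < T := lt_of_le_of_ne (Finset.sum_nonneg fun i _ => hc i) (Ne.symm hT0)
        refine ⟨(T, Finset.univ.centerMass c s), ⟨hTpos.le, ?_⟩, ?_⟩
        · exact Finset.centerMass_mem_convexHull _ (fun i _ => hc i) hTpos fun i _ => hs i
        · show T • Finset.univ.centerMass c s = _
          rw [Finset.centerMass, ← hT, smul_inv_smul₀ hT0]
    · rintro x ⟨⟨t, c⟩, ⟨ht, hc⟩, rfl⟩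
      exact smul_mem_coneGen ht (convexHull_subset_coneGen S' hc)
  -- compact slices
  have hslice : ∀ R : ℝ, IsCompact (coneGen S' ∩ Metric.closedBall 0 R) := by
    intro R
    have hTbound : coneGen S' ∩ Metric.closedBall 0 R ⊆
        (fun p : ℝ × V => p.1 • p.2) '' (Set.Icc (0 : ℝ) (‖f‖ * R / b) ×ˢ C) := by
      rintro x ⟨hxK, hxB⟩
      rw [hKrep] at hxK
      obtain ⟨⟨t, c⟩, ⟨ht, hc⟩, rfl⟩ := hxK
      refine ⟨(t, c), ⟨⟨ht, ?_⟩, hc⟩, rfl⟩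
      have ht' : (0 : ℝ) ≤ t := ht
      have h1 : t * b ≤ t * f c := mul_le_mul_of_nonneg_left (hfb c hc).le ht'
      have h2 : f (t • c) ≤ ‖f‖ * R := by
        calc f (t • c) ≤ ‖f (t • c)‖ := le_abs_self _
          _ ≤ ‖f‖ * ‖t • c‖ := f.le_opNorm _
          _ ≤ ‖f‖ * R := by
              have : ‖t • c‖ ≤ R := by
                simpa [Metric.mem_closedBall, dist_zero_right] using hxB
              exact mul_le_mul_of_nonneg_left this (norm_nonneg f)
      have h3 : f (t • c) = t * f c := by rw [map_smul, smul_eq_mul]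
      rw [le_div_iff₀ hb0]
      nlinarith
    have himg : IsCompact ((fun p : ℝ × V => p.1 • p.2) ''
        (Set.Icc (0 : ℝ) (‖f‖ * R / b) ×ˢ C)) :=
      (isCompact_Icc.prod hCcpt).image (continuous_fst.smul continuous_snd)
    have heq : coneGen S' ∩ Metric.closedBall 0 R =
        ((fun p : ℝ × V => p.1 • p.2) '' (Set.Icc (0 : ℝ) (‖f‖ * R / b) ×ˢ C)) ∩
          Metric.closedBall 0 R := by
      apply Set.Subset.antisymm
      · exact fun x hx => ⟨hTbound hx, hx.2⟩
      · rintro x ⟨hx1, hx2⟩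
        refine ⟨?_, hx2⟩
        obtain ⟨⟨t, c⟩, ⟨⟨ht0, _⟩, hc⟩, rfl⟩ := hx1
        exact smul_mem_coneGen ht0 (convexHull_subset_coneGen S' hc)
    rw [heq]
    exact himg.inter_right Metric.isClosed_closedBall
  -- sequential closedness
  apply IsSeqClosed.isClosed
  intro u x hu hux
  have hR : ∃ N : ℕ, ∀ n ≥ N, dist (u n) x ≤ 1 := by
    have := (Metric.tendsto_atTop.1 hux) 1 one_pos
    obtain ⟨N, hN⟩ := this
    exact ⟨N, fun n hn => (hN n hn).le⟩
  obtain ⟨N, hN⟩ := hR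
  set R : ℝ := ‖x‖ + 1 with hRdef
  have hmem : ∀ n, u (n + N) ∈ coneGen S' ∩ Metric.closedBall 0 R := by
    intro n
    refine ⟨hu _, ?_⟩
    rw [Metric.mem_closedBall, dist_zero_right]
    calc ‖u (n + N)‖ = ‖(u (n + N) - x) + x‖ := congrArg norm (by abel)
      _ ≤ ‖u (n + N) - x‖ + ‖x‖ := norm_add_le _ _
      _ ≤ 1 + ‖x‖ := by
          have := hN (n + N) (Nat.le_add_left N n)
          rw [dist_eq_norm] at this
          linarith
      _ = R := by rw [hRdef]; ring
  have htail : Filter.Tendsto (fun n => u (n + N)) Filter.atTop (nhds x) :=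
    hux.comp (Filter.tendsto_add_atTop_nat N)
  have hxin : x ∈ coneGen S' ∩ Metric.closedBall 0 R :=
    ((hslice R).isClosed.isSeqClosed) hmem htail
  exact hxin.1

end Closed

/-- Theorem 4.7 (abstract convex-geometric content): the sum of a polytope `conv F` and
a proper finitely generated cone `cone S` equals the intersection over `v ∈ F` of the
translated cones generated by `F - v` together with `S`. -/
theorem polytope_add_proper_cone_eq_iInter
    {V : Type*} [NormedAddCommGroup V] [NormedSpace ℝ V] [FiniteDimensional ℝ V]
    (F : Set V) (hFfin : F.Finite) (hFne : F.Nonempty)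
    (S : Set V) (hSfin : S.Finite)
    (hproper : ∀ u ∈ coneGen S, -u ∈ coneGen S → u = 0) :
    convexHull ℝ F + coneGen S =
      ⋂ v ∈ F, (v +ᵥ coneGen ((fun w => w - v) '' F ∪ S)) := by
  apply Set.Subset.antisymm
  · -- easy direction
    rintro x hx
    rw [Set.mem_add] at hx
    obtain ⟨p, hp, k, hk, rfl⟩ := hx
    refine Set.mem_iInter₂.2 fun v hv => ?_
    rw [Set.mem_vadd_set_iff_neg_vadd_mem]
    have h1 : p - v ∈ coneGen ((fun w => w - v) '' F ∪ S) :=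
      coneGen_mono Set.subset_union_left (sub_mem_coneGen_of_mem_convexHull hp)
    have h2 : k ∈ coneGen ((fun w => w - v) '' F ∪ S) :=
      coneGen_mono Set.subset_union_right hk
    have : (-v +ᵥ (p + k) : V) = (p - v) + k := by
      show -v + (p + k) = (p - v) + k
      abel
    rw [this]
    exact add_mem_coneGen h1 h2
  · -- hard direction
    intro x hx
    by_contra hxP
    set P : Set V := convexHull ℝ F + coneGen S with hPdef
    have hPconv : Convex ℝ P := (convex_convexHull ℝ F).add (coneGen_convex S)
    have hPclosed : IsClosed P :=
      (coneGen_isClosed S hSfin hproper).add_left_of_isCompact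
        (hFfin.isCompact_convexHull (𝕜 := ℝ))
    obtain ⟨f, u, hu, hux⟩ := geometric_hahn_banach_closed_point hPconv hPclosed hxP
    -- f is nonpositive on the cone
    obtain ⟨v₀, hv₀⟩ := id hFne
    have hv₀P : ∀ k ∈ coneGen S, v₀ + k ∈ P := fun k hk =>
      Set.add_mem_add (subset_convexHull ℝ F hv₀) hk
    have hK0 : ∀ s ∈ coneGen S, f s ≤ 0 := by
      intro s hs
      by_contra h
      push_neg at h
      set t : ℝ := max 0 ((u - f v₀) / f s) with htdef
      have ht0 : 0 ≤ t := le_max_left _ _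
      have hts : (u - f v₀) / f s ≤ t := le_max_right _ _
      have hmem : v₀ + t • s ∈ P := hv₀P _ (smul_mem_coneGen ht0 hs)
      have := hu _ hmem
      rw [map_add, map_smul, smul_eq_mul] at this
      have h2 : u - f v₀ ≤ t * f s := (div_le_iff₀ h).1 hts
      linarith
    -- pick maximizer of f on F
    obtain ⟨v, hvF, hvmax⟩ := Set.exists_max_image F (fun w => f w) hFfin hFne
    have hxv : -v +ᵥ x ∈ coneGen ((fun w => w - v) '' F ∪ S) := by
      have := Set.mem_iInter₂.1 hx v hvF
      rwa [Set.mem_vadd_set_iff_neg_vadd_mem] at this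
    have hnonpos : f (-v + x) ≤ 0 := by
      refine coneGen_apply_nonpos (f : V →ₗ[ℝ] ℝ) ?_ hxv
      rintro g (⟨w, hw, rfl⟩ | hgS)
      · have := hvmax w hw
        simp only [map_sub, ContinuousLinearMap.coe_coe]
        linarith
      · exact hK0 g (subset_coneGen S hgS)
    have hvP : v ∈ P := by
      have : v + (0 : V) ∈ P := hv₀P 0 (zero_mem_coneGen S) |> fun _ => by
        exact Set.add_mem_add (subset_convexHull ℝ F hvF) (zero_mem_coneGen S)
      simpa using this
    have hfv : f v < u := hu v hvP
    rw [map_add, map_neg] at hnonpos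
    linarith
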